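/- For all sufficiently large even n there exist probability distributions σ_0 and σ_1 over rectangles U × V with U, V ⊆ {0,1}^n such that: every rectangle U × V in the support of σ_0 satisfies d_H(u,u') ≤ n/4 for all u ∈ U, u' ∈ V (so it is 0-monochromatic for GH_{n,1/4}); every rectangle U × V in the support of σ_1 satisfies d_H(u,v) ≥ 3n/4 for all u ∈ U, v ∈ V (so it is 1-monochromatic for GH_{n,1/4}); and both σ_0 and σ_1 are (2^{−n/100}, ⌊n/100⌋)-hitting rectangle-distributions. -/

import Mathlib

/-- A probability distribution over (combinatorial) rectangles `U × V` with
`U ⊆ α` and `V ⊆ β`. -/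
structure RectDist (α β : Type*) [Fintype α] [Fintype β] where
  prob : Finset α × Finset β → ℝ
  nonneg : ∀ R, 0 ≤ prob R
  sum_one : ∑ R, prob R = 1

open Classical in
/-- The probability, under `σ`, that a sampled rectangle satisfies `P`. -/
noncomputable def rectProb {α β : Type*} [Fintype α] [Fintype β]
    (σ : RectDist α β) (P : Finset α × Finset β → Prop) : ℝ :=
  ∑ R, if P R then σ.prob R else 0

/-- `σ` is a `(δ, h)`-hitting rectangle-distribution: every rectangle `A × B`
with `|A| ≥ 2^{-h}|α|` and `|B| ≥ 2^{-h}|β|` is hit with probability `≥ 1 - δ`. -/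
def IsHitting {α β : Type*} [Fintype α] [Fintype β] [DecidableEq α] [DecidableEq β]
    (σ : RectDist α β) (δ : ℝ) (h : ℕ) : Prop :=
  ∀ (A : Finset α) (B : Finset β),
    (2:ℝ)^(-(h:ℝ)) * (Fintype.card α : ℝ) ≤ (A.card : ℝ) →
    (2:ℝ)^(-(h:ℝ)) * (Fintype.card β : ℝ) ≤ (B.card : ℝ) →
    1 - δ ≤ rectProb σ (fun R => ((R.1 ×ˢ R.2) ∩ (A ×ˢ B)).Nonempty)

/-- `g` has `(δ, h)`-hitting monochromatic rectangle-distributions: for each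
`c ∈ {0,1}` there is a `(δ,h)`-hitting distribution supported on
`c`-monochromatic rectangles of `g`. -/
def HasHittingMonoDists {α β : Type*} [Fintype α] [Fintype β] [DecidableEq α] [DecidableEq β]
    (g : α → β → Bool) (δ : ℝ) (h : ℕ) : Prop :=
  ∀ c : Bool, ∃ σ : RectDist α β, IsHitting σ δ h ∧
    ∀ R, σ.prob R ≠ 0 → ∀ u ∈ R.1, ∀ v ∈ R.2, g u v = c

open Finset Real

namespace GHaux

lemma two_point (a b L : ℝ) (h : |a - b| ≤ 1) :
    Real.exp (L*a) + Real.exp (L*b) ≤ 2 * Real.exp (L*(a+b)/2 + L^2/8) := by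
  have key : Real.exp (L*a) + Real.exp (L*b)
      = 2 * Real.exp (L*(a+b)/2) * Real.cosh (L*(a-b)/2) := by
    rw [Real.cosh_eq]
    rw [show 2 * Real.exp (L*(a+b)/2) * ((Real.exp (L*(a-b)/2) + Real.exp (-(L*(a-b)/2)))/2)
        = Real.exp (L*(a+b)/2) * Real.exp (L*(a-b)/2)
          + Real.exp (L*(a+b)/2) * Real.exp (-(L*(a-b)/2)) by ring]
    rw [← Real.exp_add, ← Real.exp_add]
    ring_nf
  rw [key, Real.exp_add]
  have h1 : Real.cosh (L*(a-b)/2) ≤ Real.exp ((L*(a-b)/2)^2/2) :=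
    Real.cosh_le_exp_half_sq _
  have h2 : (L*(a-b)/2)^2/2 ≤ L^2/8 := by
    have : (a-b)^2 ≤ 1 := by nlinarith [sq_abs (a-b), abs_nonneg (a-b)]
    nlinarith [sq_nonneg L]
  have h3 : Real.cosh (L*(a-b)/2) ≤ Real.exp (L^2/8) :=
    h1.trans (Real.exp_le_exp.mpr h2)
  have := Real.exp_pos (L*(a+b)/2)
  nlinarith [Real.exp_pos (L^2/8)]

lemma mgf_bound : ∀ (n : ℕ) (f : (Fin n → Bool) → ℝ),
    (∀ x i, |f x - f (Function.update x i (!x i))| ≤ 1) → ∀ L : ℝ,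
    ∑ x : Fin n → Bool, Real.exp (L * f x)
      ≤ (2:ℝ)^n * Real.exp (L * ((∑ x : Fin n → Bool, f x)/(2:ℝ)^n) + L^2 * n / 8) := by
  intro n
  induction n with
  | zero =>
    intro f _ L
    rw [Fintype.sum_unique, Fintype.sum_unique]
    simp
  | succ n ih =>
    intro f hf L
    set g : (Fin n → Bool) → ℝ := fun y => (f (Fin.cons true y) + f (Fin.cons false y))/2 with hg
    have hgbd : ∀ y i, |g y - g (Function.update y i (!y i))| ≤ 1 := by
      intro y i
      have h1 := hf (Fin.cons true y) i.succ
      have h2 := hf (Fin.cons false y) i.succ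
      rw [Fin.cons_succ, ← Fin.cons_update] at h1 h2
      have e1 := abs_le.mp h1
      have e2 := abs_le.mp h2
      rw [abs_le]
      constructor <;> · simp only [hg]; linarith [e1.1, e1.2, e2.1, e2.2]
    have esum : ∀ F : (Fin (n+1) → Bool) → ℝ,
        ∑ x : Fin (n+1) → Bool, F x
          = ∑ y : Fin n → Bool, (F (Fin.cons true y) + F (Fin.cons false y)) := by
      intro F
      rw [← Equiv.sum_comp (Fin.consEquiv (fun _ => Bool)) F, Fintype.sum_prod_type,
        Fintype.sum_bool, ← Finset.sum_add_distrib]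
      simp [Fin.consEquiv]
    have hsum2 : ∑ x : Fin (n+1) → Bool, f x = 2 * ∑ y : Fin n → Bool, g y := by
      rw [esum f, Finset.mul_sum]
      refine Finset.sum_congr rfl fun y _ => ?_
      simp only [hg]; ring
    have step : ∑ x : Fin (n+1) → Bool, Real.exp (L * f x)
        ≤ 2 * Real.exp (L^2/8) * ∑ y : Fin n → Bool, Real.exp (L * g y) := by
      rw [esum (fun x => Real.exp (L * f x)), Finset.mul_sum]
      refine Finset.sum_le_sum fun y _ => ?_
      have hb : |f (Fin.cons true y) - f (Fin.cons false y)| ≤ 1 := by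
        have := hf (Fin.cons true y) 0
        rwa [Fin.cons_zero, Fin.update_cons_zero] at this
      have h2p := two_point (f (Fin.cons true y)) (f (Fin.cons false y)) L hb
      calc Real.exp (L * f (Fin.cons true y)) + Real.exp (L * f (Fin.cons false y))
          ≤ 2 * Real.exp (L*(f (Fin.cons true y) + f (Fin.cons false y))/2 + L^2/8) := h2p
        _ = 2 * Real.exp (L^2/8) * Real.exp (L * g y) := by
            rw [mul_assoc, ← Real.exp_add]; simp only [hg]; ring_nf
    have ihg := ih g hgbd L
    have hpos : (0:ℝ) < 2 * Real.exp (L^2/8) := by positivity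
    calc ∑ x : Fin (n+1) → Bool, Real.exp (L * f x)
        ≤ 2 * Real.exp (L^2/8) * ∑ y : Fin n → Bool, Real.exp (L * g y) := step
      _ ≤ 2 * Real.exp (L^2/8) *
            ((2:ℝ)^n * Real.exp (L * ((∑ y : Fin n → Bool, g y)/(2:ℝ)^n) + L^2 * n / 8)) :=
          mul_le_mul_of_nonneg_left ihg (le_of_lt hpos)
      _ = (2:ℝ)^(n+1) * Real.exp (L * ((∑ x : Fin (n+1) → Bool, f x)/(2:ℝ)^(n+1))
            + L^2 * ((n+1 : ℕ) : ℝ) / 8) := by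
          rw [hsum2,
            show 2 * Real.exp (L^2/8)
                * ((2:ℝ)^n * Real.exp (L * ((∑ y : Fin n → Bool, g y)/(2:ℝ)^n) + L^2 * n / 8))
              = (2:ℝ)^(n+1) * (Real.exp (L^2/8)
                * Real.exp (L * ((∑ y : Fin n → Bool, g y)/(2:ℝ)^n) + L^2 * n / 8)) by ring,
            ← Real.exp_add]
          congr 1
          have h2 : ((2:ℝ)^n) ≠ 0 := by positivity
          push_cast
          field_simp
          ring

lemma upper_tail (n : ℕ) (hn : 0 < n) (f : (Fin n → Bool) → ℝ)
    (hf : ∀ x i, |f x - f (Function.update x i (!x i))| ≤ 1) (s : ℝ)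
    (hs : (∑ x : Fin n → Bool, f x)/(2:ℝ)^n ≤ s) :
    ((Finset.univ.filter (fun x => s ≤ f x)).card : ℝ)
      ≤ (2:ℝ)^n * Real.exp (-2 * (s - (∑ x : Fin n → Bool, f x)/(2:ℝ)^n)^2 / n) := by
  set μ : ℝ := (∑ x : Fin n → Bool, f x)/(2:ℝ)^n with hμ
  set L : ℝ := 4 * (s - μ) / n with hL
  have hnR : (0:ℝ) < n := by exact_mod_cast hn
  have hL0 : 0 ≤ L := by
    apply div_nonneg _ (le_of_lt hnR); linarith
  have h1 : ((Finset.univ.filter (fun x => s ≤ f x)).card : ℝ) * Real.exp (L * s)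
      ≤ ∑ x : Fin n → Bool, Real.exp (L * f x) := by
    calc ((Finset.univ.filter (fun x => s ≤ f x)).card : ℝ) * Real.exp (L * s)
        = ∑ _x ∈ Finset.univ.filter (fun x => s ≤ f x), Real.exp (L * s) := by
          rw [Finset.sum_const, nsmul_eq_mul]
      _ ≤ ∑ x ∈ Finset.univ.filter (fun x => s ≤ f x), Real.exp (L * f x) := by
          refine Finset.sum_le_sum fun x hx => ?_
          have := (Finset.mem_filter.mp hx).2
          exact Real.exp_le_exp.mpr (mul_le_mul_of_nonneg_left this hL0)
      _ ≤ ∑ x : Fin n → Bool, Real.exp (L * f x) := by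
          refine Finset.sum_le_sum_of_subset_of_nonneg (Finset.filter_subset _ _)
            fun x _ _ => (Real.exp_pos _).le
  have h2 := (mgf_bound n f hf L)
  have h3 : ((Finset.univ.filter (fun x => s ≤ f x)).card : ℝ)
      ≤ ((2:ℝ)^n * Real.exp (L * μ + L^2 * n / 8)) / Real.exp (L * s) := by
    rw [le_div_iff₀ (Real.exp_pos _)]
    exact h1.trans h2
  have h4 : ((2:ℝ)^n * Real.exp (L * μ + L^2 * n / 8)) / Real.exp (L * s)
      = (2:ℝ)^n * Real.exp (L * μ + L^2 * n / 8 - L * s) := by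
    rw [Real.exp_sub]; ring
  have h5 : L * μ + L^2 * n / 8 - L * s = -2 * (s - μ)^2 / n := by
    rw [hL]; field_simp; ring
  rw [h4, h5] at h3
  exact h3

lemma lower_tail (n : ℕ) (hn : 0 < n) (f : (Fin n → Bool) → ℝ)
    (hf : ∀ x i, |f x - f (Function.update x i (!x i))| ≤ 1) (s : ℝ)
    (hs : s ≤ (∑ x : Fin n → Bool, f x)/(2:ℝ)^n) :
    ((Finset.univ.filter (fun x => f x ≤ s)).card : ℝ)
      ≤ (2:ℝ)^n * Real.exp (-2 * ((∑ x : Fin n → Bool, f x)/(2:ℝ)^n - s)^2 / n) := by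
  have hf' : ∀ x i, |(fun x => -f x) x - (fun x => -f x) (Function.update x i (!x i))| ≤ 1 := by
    intro x i
    have := hf x i
    rw [abs_sub_comm, sub_eq_neg_add] at this
    simpa using this
  have hsum : (∑ x : Fin n → Bool, (fun x => -f x) x) = -(∑ x : Fin n → Bool, f x) := by
    simp
  have hs' : (∑ x : Fin n → Bool, (fun x => -f x) x)/(2:ℝ)^n ≤ -s := by
    rw [hsum]; rw [neg_div]; linarith
  have h := upper_tail n hn (fun x => -f x) hf' (-s) hs'
  rw [hsum] at h
  have hset : (Finset.univ.filter (fun x => -s ≤ (fun x => -f x) x))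
      = (Finset.univ.filter (fun x => f x ≤ s)) := by
    apply Finset.filter_congr; intro x _; simp
  rw [hset] at h
  have : (-s - -(∑ x : Fin n → Bool, f x) / (2:ℝ)^n)^2
      = ((∑ x : Fin n → Bool, f x)/(2:ℝ)^n - s)^2 := by
    rw [neg_div]; ring
  rw [this] at h
  exact h

noncomputable def distA {n : ℕ} (A : Finset (Fin n → Bool)) (hA : A.Nonempty)
    (x : Fin n → Bool) : ℕ :=
  A.inf' hA (fun a => hammingDist x a)

lemma distA_eq_zero {n : ℕ} {A : Finset (Fin n → Bool)} (hA : A.Nonempty)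
    {x : Fin n → Bool} (hx : x ∈ A) : distA A hA x = 0 :=
  Nat.le_zero.mp (by simpa [distA, hammingDist_self] using Finset.inf'_le (fun a => hammingDist x a) hx)

lemma distA_le_add {n : ℕ} {A : Finset (Fin n → Bool)} (hA : A.Nonempty)
    (x y : Fin n → Bool) : distA A hA x ≤ hammingDist x y + distA A hA y := by
  obtain ⟨a, ha, hd⟩ := Finset.exists_mem_eq_inf' hA (fun a => hammingDist y a)
  calc distA A hA x ≤ hammingDist x a := Finset.inf'_le _ ha
    _ ≤ hammingDist x y + hammingDist y a := hammingDist_triangle x y a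
    _ = hammingDist x y + distA A hA y := by rw [distA, ← hd]

lemma hammingDist_update {n : ℕ} (x : Fin n → Bool) (i : Fin n) (b : Bool) :
    hammingDist x (Function.update x i b) ≤ 1 := by
  unfold hammingDist
  refine le_trans (Finset.card_le_card ?_) (by simp : ({i} : Finset (Fin n)).card ≤ 1)
  intro j hj
  simp only [Finset.mem_filter, Finset.mem_univ, true_and] at hj
  simp only [Finset.mem_singleton]
  by_contra hne
  exact hj (by rw [Function.update_of_ne hne])

lemma distA_bdd {n : ℕ} {A : Finset (Fin n → Bool)} (hA : A.Nonempty) :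
    ∀ (x : Fin n → Bool) (i : Fin n),
      |((distA A hA x : ℝ)) - ((distA A hA (Function.update x i (!x i)) : ℝ))| ≤ 1 := by
  intro x i
  set y := Function.update x i (!x i) with hy
  have hxy : hammingDist x y ≤ 1 := hammingDist_update x i (!x i)
  have hyx : hammingDist y x ≤ 1 := by rw [hammingDist_comm]; exact hxy
  have h1 := distA_le_add hA x y
  have h2 := distA_le_add hA y x
  rw [abs_le]
  constructor
  · have : (distA A hA y : ℝ) ≤ hammingDist y x + distA A hA x := by exact_mod_cast h2
    have hc : (hammingDist y x : ℝ) ≤ 1 := by exact_mod_cast hyx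
    linarith
  · have : (distA A hA x : ℝ) ≤ hammingDist x y + distA A hA y := by exact_mod_cast h1
    have hc : (hammingDist x y : ℝ) ≤ 1 := by exact_mod_cast hxy
    linarith

set_option maxHeartbeats 1000000 in
lemma miss_bound {n : ℕ} (hn : 1000 ≤ n) (A : Finset (Fin n → Bool))
    (hA : (2:ℝ) ^ (-(n:ℝ)/100) * (2:ℝ)^n ≤ (A.card : ℝ)) :
    ((Finset.univ.filter
        (fun z : Fin n → Bool => ¬ ∃ a ∈ A, hammingDist z a ≤ n/8)).card : ℝ)
      ≤ (2:ℝ)^n * ((2:ℝ) ^ (-(n:ℝ)/100) / 2) := by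
  have hn0 : (0:ℝ) < n := by positivity
  have h2n : (0:ℝ) < (2:ℝ)^n := by positivity
  have hrp : (0:ℝ) < (2:ℝ) ^ (-(n:ℝ)/100) := Real.rpow_pos_of_pos (by norm_num) _
  have hAne : A.Nonempty := by
    rw [← Finset.card_pos]
    by_contra hc
    push_neg at hc
    interval_cases h : A.card
    · simp only [Nat.cast_zero] at hA; nlinarith
  set f : (Fin n → Bool) → ℝ := fun z => (distA A hAne z : ℝ) with hf
  have hfb : ∀ x i, |f x - f (Function.update x i (!x i))| ≤ 1 := fun x i => distA_bdd hAne x i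
  set μ : ℝ := (∑ z : Fin n → Bool, f z)/(2:ℝ)^n with hμ
  have hμ0 : 0 ≤ μ := by
    apply div_nonneg _ h2n.le
    exact Finset.sum_nonneg fun z _ => by positivity
  have hL2 : Real.log 2 < 0.6931471808 := Real.log_two_lt_d9
  have hL2' : 0 < Real.log 2 := Real.log_pos (by norm_num)
  -- mean bound
  have hsub : A ⊆ Finset.univ.filter (fun z => f z ≤ 0) := by
    intro x hx
    simp only [Finset.mem_filter, Finset.mem_univ, true_and, hf]
    rw [distA_eq_zero hAne hx]; simp
  have hlow := lower_tail n (by omega) f hfb 0 hμ0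
  have hAcard : (A.card : ℝ) ≤ ((Finset.univ.filter (fun z => f z ≤ 0)).card : ℝ) := by
    exact_mod_cast Finset.card_le_card hsub
  have hexp1 : (2:ℝ) ^ (-(n:ℝ)/100) ≤ Real.exp (-2 * μ^2 / n) := by
    have h1 : (2:ℝ) ^ (-(n:ℝ)/100) * (2:ℝ)^n
        ≤ (2:ℝ)^n * Real.exp (-2 * (μ - 0)^2 / n) := le_trans hA (le_trans hAcard hlow)
    rw [sub_zero] at h1
    nlinarith [Real.exp_pos (-2 * μ^2 / n)]
  have hμub : μ ≤ 589/10000 * n := by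
    have hlog : -(n:ℝ)/100 * Real.log 2 ≤ -2 * μ^2 / n := by
      have := Real.log_le_log hrp hexp1
      rwa [Real.log_rpow (by norm_num), Real.log_exp] at this
    have hsq : μ^2 ≤ n^2 * Real.log 2 / 200 := by
      have hmul := mul_le_mul_of_nonneg_right hlog hn0.le
      rw [div_mul_cancel₀ _ (ne_of_gt hn0)] at hmul
      nlinarith [hmul]
    nlinarith [sq_nonneg (μ + 589/10000 * n)]
  -- upper tail
  have hμ8 : μ ≤ (n:ℝ)/8 := by nlinarith
  have hup := upper_tail n (by omega) f hfb ((n:ℝ)/8) hμ8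
  -- event inclusion
  have hincl : (Finset.univ.filter
        (fun z : Fin n → Bool => ¬ ∃ a ∈ A, hammingDist z a ≤ n/8))
      ⊆ Finset.univ.filter (fun z => (n:ℝ)/8 ≤ f z) := by
    intro z hz
    simp only [Finset.mem_filter, Finset.mem_univ, true_and] at hz ⊢
    push_neg at hz
    have hd : n/8 + 1 ≤ distA A hAne z := by
      apply Finset.le_inf'
      intro a ha
      exact hz a ha
    have hcast : ((n/8 + 1 : ℕ) : ℝ) ≤ f z := by
      simp only [hf]; exact_mod_cast hd
    have h8 : (n:ℝ)/8 ≤ ((n/8 + 1 : ℕ) : ℝ) := by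
      have : n ≤ 8 * (n/8) + 7 := by omega
      have := (Nat.cast_le (α := ℝ)).mpr this
      push_cast at this ⊢
      linarith
    exact le_trans h8 hcast
  have hcard : ((Finset.univ.filter
        (fun z : Fin n → Bool => ¬ ∃ a ∈ A, hammingDist z a ≤ n/8)).card : ℝ)
      ≤ ((Finset.univ.filter (fun z => (n:ℝ)/8 ≤ f z)).card : ℝ) := by
    exact_mod_cast Finset.card_le_card hincl
  -- final numeric bound
  have hfin : Real.exp (-2 * ((n:ℝ)/8 - μ)^2 / n) ≤ (2:ℝ) ^ (-(n:ℝ)/100) / 2 := by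
    have hn1000 : (1000:ℝ) ≤ n := by exact_mod_cast hn
    have hkey : ((n:ℝ)/100 * Real.log 2 + Real.log 2) * n ≤ 2 * ((n:ℝ)/8 - μ)^2 := by
      have h8 : 661/10000 * (n:ℝ) ≤ (n:ℝ)/8 - μ := by linarith
      have h80 : (0:ℝ) ≤ 661/10000 * (n:ℝ) := by positivity
      have hsq8 : (661/10000 * (n:ℝ)) * (661/10000 * (n:ℝ))
          ≤ ((n:ℝ)/8 - μ) * ((n:ℝ)/8 - μ) := mul_le_mul h8 h8 h80 (le_trans h80 h8)
      have hLn : Real.log 2 * n ≤ 0.6931471808 * n :=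
        mul_le_mul_of_nonneg_right hL2.le hn0.le
      nlinarith [hsq8, mul_le_mul_of_nonneg_right hLn hn0.le,
        mul_le_mul_of_nonneg_right hn1000 hn0.le, hLn]
    have hexp : -2 * ((n:ℝ)/8 - μ)^2 / n ≤ -(n:ℝ)/100 * Real.log 2 - Real.log 2 := by
      rw [div_le_iff₀ hn0]
      nlinarith [hkey]
    calc Real.exp (-2 * ((n:ℝ)/8 - μ)^2 / n)
        ≤ Real.exp (-(n:ℝ)/100 * Real.log 2 - Real.log 2) := Real.exp_le_exp.mpr hexp
      _ = (2:ℝ) ^ (-(n:ℝ)/100) / 2 := by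
          rw [Real.exp_sub, Real.exp_log (by norm_num : (0:ℝ) < 2),
            Real.rpow_def_of_pos (by norm_num : (0:ℝ) < 2), mul_comm]
  calc ((Finset.univ.filter
        (fun z : Fin n → Bool => ¬ ∃ a ∈ A, hammingDist z a ≤ n/8)).card : ℝ)
      ≤ ((Finset.univ.filter (fun z => (n:ℝ)/8 ≤ f z)).card : ℝ) := hcard
    _ ≤ (2:ℝ)^n * Real.exp (-2 * ((n:ℝ)/8 - μ)^2 / n) := hup
    _ ≤ (2:ℝ)^n * ((2:ℝ) ^ (-(n:ℝ)/100) / 2) := by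
        exact mul_le_mul_of_nonneg_left hfin h2n.le

noncomputable def sigmaOf (n : ℕ)
    (rect : (Fin n → Bool) → Finset (Fin n → Bool) × Finset (Fin n → Bool)) :
    RectDist (Fin n → Bool) (Fin n → Bool) where
  prob R := ((Finset.univ.filter (fun z => rect z = R)).card : ℝ) / (2:ℝ)^n
  nonneg R := by positivity
  sum_one := by
    rw [← Finset.sum_div, div_eq_one_iff_eq (by positivity : ((2:ℝ)^n) ≠ 0)]
    rw [← Nat.cast_sum]
    have := Finset.card_eq_sum_card_fiberwise
      (f := rect) (s := (Finset.univ : Finset (Fin n → Bool)))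
      (t := Finset.univ) (fun z _ => Finset.mem_univ (rect z))
    rw [← this, Finset.card_univ]
    simp

lemma prob_sigmaOf_ne_zero {n : ℕ}
    {rect : (Fin n → Bool) → Finset (Fin n → Bool) × Finset (Fin n → Bool)}
    {R} (h : (sigmaOf n rect).prob R ≠ 0) : ∃ z, rect z = R := by
  simp only [sigmaOf] at h
  have : (Finset.univ.filter (fun z => rect z = R)).card ≠ 0 := by
    intro hc
    rw [hc] at h
    simp at h
  have hpos := Nat.pos_of_ne_zero this
  rw [Finset.card_pos] at hpos
  obtain ⟨z, hz⟩ := hpos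
  exact ⟨z, (Finset.mem_filter.mp hz).2⟩

open Classical in
lemma rectProb_sigmaOf {n : ℕ}
    (rect : (Fin n → Bool) → Finset (Fin n → Bool) × Finset (Fin n → Bool))
    (P : Finset (Fin n → Bool) × Finset (Fin n → Bool) → Prop) :
    rectProb (sigmaOf n rect) P
      = ((Finset.univ.filter (fun z => P (rect z))).card : ℝ) / (2:ℝ)^n := by
  rw [rectProb]
  have hterm : ∀ R, (if P R then (sigmaOf n rect).prob R else 0)
      = ((Finset.univ.filter (fun z => rect z = R ∧ P (rect z))).card : ℝ)/(2:ℝ)^n := by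
    intro R
    by_cases h : P R
    · rw [if_pos h]
      show ((Finset.univ.filter (fun z => rect z = R)).card : ℝ) / (2:ℝ)^n = _
      congr 1
      norm_cast
      apply congrArg Finset.card
      apply Finset.filter_congr
      intro z _
      constructor
      · exact fun he => ⟨he, he ▸ h⟩
      · exact And.left
    · rw [if_neg h]
      symm
      rw [div_eq_zero_iff]
      left
      norm_cast
      rw [Finset.card_eq_zero, Finset.filter_eq_empty_iff]
      rintro z _ ⟨he, hp⟩
      exact h (he ▸ hp)
  rw [Finset.sum_congr rfl (fun R _ => hterm R), ← Finset.sum_div]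
  congr 1
  norm_cast
  rw [Finset.card_eq_sum_card_fiberwise
    (f := rect) (s := Finset.univ.filter (fun z => P (rect z)))
    (t := Finset.univ) (fun z _ => Finset.mem_univ (rect z))]
  apply Finset.sum_congr rfl
  intro R _
  rw [Finset.filter_filter]
  congr 1
  apply Finset.filter_congr
  intro z _
  tauto

def ball (n : ℕ) (z : Fin n → Bool) (r : ℕ) : Finset (Fin n → Bool) :=
  Finset.univ.filter (fun u => hammingDist z u ≤ r)

lemma mem_ball {n : ℕ} {z u : Fin n → Bool} {r : ℕ} :
    u ∈ ball n z r ↔ hammingDist z u ≤ r := by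
  simp [ball]

lemma ball_inter_nonempty {n : ℕ} {z : Fin n → Bool} {r : ℕ} {A : Finset (Fin n → Bool)} :
    (ball n z r ∩ A).Nonempty ↔ ∃ a ∈ A, hammingDist z a ≤ r := by
  constructor
  · rintro ⟨a, ha⟩
    rw [Finset.mem_inter, mem_ball] at ha
    exact ⟨a, ha.2, ha.1⟩
  · rintro ⟨a, haA, had⟩
    exact ⟨a, Finset.mem_inter.mpr ⟨mem_ball.mpr had, haA⟩⟩

open Classical in
lemma hitting_of {n : ℕ} (hn : 1000 ≤ n)
    (τ : (Fin n → Bool) → (Fin n → Bool)) (hτ : Function.Bijective τ) :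
    IsHitting (sigmaOf n (fun z => (ball n z (n/8), ball n (τ z) (n/8))))
      ((2:ℝ) ^ (-(n:ℝ)/100)) (n/100) := by
  intro A B hA hB
  have h2n : (0:ℝ) < (2:ℝ)^n := by positivity
  have hcard : (Fintype.card (Fin n → Bool) : ℝ) = (2:ℝ)^n := by
    rw [Fintype.card_fun]
    push_cast
    simp
  have hmono : (2:ℝ) ^ (-(n:ℝ)/100) ≤ (2:ℝ) ^ (-((n/100 : ℕ):ℝ)) := by
    apply (Real.rpow_le_rpow_left_iff (by norm_num : (1:ℝ) < 2)).mpr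
    have h := Nat.cast_div_le (m := n) (n := 100) (α := ℝ)
    push_cast at h
    linarith
  have hrp : (0:ℝ) < (2:ℝ) ^ (-(n:ℝ)/100) := Real.rpow_pos_of_pos (by norm_num) _
  have hA' : (2:ℝ) ^ (-(n:ℝ)/100) * (2:ℝ)^n ≤ (A.card : ℝ) := by
    rw [hcard] at hA
    nlinarith
  have hB' : (2:ℝ) ^ (-(n:ℝ)/100) * (2:ℝ)^n ≤ (B.card : ℝ) := by
    rw [hcard] at hB
    nlinarith
  rw [rectProb_sigmaOf]
  simp only [Finset.product_inter_product, Finset.nonempty_product]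
  set good := Finset.univ.filter (fun z : Fin n → Bool =>
    (ball n z (n/8) ∩ A).Nonempty ∧ (ball n (τ z) (n/8) ∩ B).Nonempty) with hgood
  set bad := Finset.univ.filter (fun z : Fin n → Bool =>
    ¬((ball n z (n/8) ∩ A).Nonempty ∧ (ball n (τ z) (n/8) ∩ B).Nonempty)) with hbad
  have hsplit : good.card + bad.card = 2^n := by
    rw [hgood, hbad, Finset.card_filter_add_card_filter_not, Finset.card_univ,
      Fintype.card_fun]
    simp
  have hbadsub : bad ⊆
      (Finset.univ.filter (fun z : Fin n → Bool => ¬ (ball n z (n/8) ∩ A).Nonempty))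
      ∪ (Finset.univ.filter (fun z : Fin n → Bool => ¬ (ball n (τ z) (n/8) ∩ B).Nonempty)) := by
    intro z hz
    rw [hbad, Finset.mem_filter] at hz
    rw [Finset.mem_union, Finset.mem_filter, Finset.mem_filter]
    have := hz.2
    tauto
  have hτcard : (Finset.univ.filter
        (fun z : Fin n → Bool => ¬ (ball n (τ z) (n/8) ∩ B).Nonempty)).card
      = (Finset.univ.filter
        (fun w : Fin n → Bool => ¬ (ball n w (n/8) ∩ B).Nonempty)).card := by
    apply Finset.card_bij (fun z _ => τ z)
    · intro z hz
      rw [Finset.mem_filter] at hz ⊢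
      exact ⟨Finset.mem_univ _, hz.2⟩
    · intro z₁ h₁ z₂ h₂ he
      exact hτ.injective he
    · intro w hw
      obtain ⟨z, hz⟩ := hτ.surjective w
      refine ⟨z, ?_, hz⟩
      rw [Finset.mem_filter] at hw ⊢
      rw [hz]
      exact ⟨Finset.mem_univ _, hw.2⟩
  have hballA : (Finset.univ.filter (fun z : Fin n → Bool => ¬ (ball n z (n/8) ∩ A).Nonempty))
      = (Finset.univ.filter (fun z : Fin n → Bool => ¬ ∃ a ∈ A, hammingDist z a ≤ n/8)) :=
    Finset.filter_congr (fun z _ => by rw [ball_inter_nonempty])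
  have hballB : (Finset.univ.filter (fun w : Fin n → Bool => ¬ (ball n w (n/8) ∩ B).Nonempty))
      = (Finset.univ.filter (fun w : Fin n → Bool => ¬ ∃ b ∈ B, hammingDist w b ≤ n/8)) :=
    Finset.filter_congr (fun w _ => by rw [ball_inter_nonempty])
  have hmA := miss_bound hn A hA'
  have hmB := miss_bound hn B hB'
  rw [← hballA] at hmA
  rw [← hballB] at hmB
  have hbadcard : (bad.card : ℝ) ≤ (2:ℝ)^n * (2:ℝ) ^ (-(n:ℝ)/100) := by
    have h1 : (bad.card : ℝ) ≤
        ((Finset.univ.filter (fun z : Fin n → Bool => ¬ (ball n z (n/8) ∩ A).Nonempty)).card : ℝ)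
        + ((Finset.univ.filter (fun w : Fin n → Bool => ¬ (ball n w (n/8) ∩ B).Nonempty)).card : ℝ) := by
      rw [← hτcard]
      have := le_trans (Finset.card_le_card hbadsub) (Finset.card_union_le _ _)
      exact_mod_cast this
    calc (bad.card : ℝ) ≤ _ := h1
      _ ≤ (2:ℝ)^n * ((2:ℝ) ^ (-(n:ℝ)/100) / 2) + (2:ℝ)^n * ((2:ℝ) ^ (-(n:ℝ)/100) / 2) := by
          exact add_le_add hmA hmB
      _ = (2:ℝ)^n * (2:ℝ) ^ (-(n:ℝ)/100) := by ring
  have hgoodeq : (good.card : ℝ) = (2:ℝ)^n - (bad.card : ℝ) := by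
    have : ((good.card + bad.card : ℕ) : ℝ) = ((2^n : ℕ) : ℝ) := by exact_mod_cast hsplit
    push_cast at this
    linarith
  rw [hgoodeq, sub_div]
  have hd : (bad.card:ℝ)/(2:ℝ)^n ≤ (2:ℝ) ^ (-(n:ℝ)/100) := by
    rw [div_le_iff₀ h2n]
    nlinarith
  have h1 : ((2:ℝ)^n)/((2:ℝ)^n) = 1 := div_self (ne_of_gt h2n)
  rw [h1]
  linarith

lemma compl_bijective {n : ℕ} :
    Function.Bijective (fun z : Fin n → Bool => (fun i => !z i : Fin n → Bool)) :=
  Function.Involutive.bijective (fun z => by funext i; simp)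

lemma hammingDist_compl {n : ℕ} (z : Fin n → Bool) :
    hammingDist z (fun i => !z i) = n := by
  simp [hammingDist]

lemma cast_div8 {n : ℕ} : ((n/8 : ℕ) : ℝ) ≤ (n:ℝ)/8 := by
  have := Nat.cast_div_le (m := n) (n := 8) (α := ℝ)
  push_cast at this
  linarith

end GHaux

/-- for all sufficiently large even `n` there are rectangle
distributions `σ₀` (supported on rectangles with all pairwise distances `≤ n/4`,
hence 0-monochromatic for `GH_{n,1/4}`) and `σ₁` (supported on rectangles with
all pairwise distances `≥ 3n/4`, hence 1-monochromatic for `GH_{n,1/4}`), both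
of which are `(2^{−n/100}, ⌊n/100⌋)`-hitting. -/
theorem gapHamming_has_hitting_mono_dists :
    ∃ N : ℕ, ∀ n ≥ N, Even n →
      ∃ σ₀ σ₁ : RectDist (Fin n → Bool) (Fin n → Bool),
        (∀ R, σ₀.prob R ≠ 0 →
          ∀ u ∈ R.1, ∀ u' ∈ R.2, (hammingDist u u' : ℝ) ≤ (n:ℝ)/4) ∧
        (∀ R, σ₁.prob R ≠ 0 →
          ∀ u ∈ R.1, ∀ v ∈ R.2, 3*(n:ℝ)/4 ≤ (hammingDist u v : ℝ)) ∧
        IsHitting σ₀ ((2:ℝ) ^ (-(n:ℝ)/100)) (n/100) ∧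
        IsHitting σ₁ ((2:ℝ) ^ (-(n:ℝ)/100)) (n/100) := by
  refine ⟨1000, fun n hn _ => ?_⟩
  refine ⟨GHaux.sigmaOf n (fun z => (GHaux.ball n z (n/8), GHaux.ball n z (n/8))),
    GHaux.sigmaOf n (fun z => (GHaux.ball n z (n/8), GHaux.ball n (fun i => !z i) (n/8))),
    ?_, ?_, ?_, ?_⟩
  · intro R hR u hu u' hu'
    obtain ⟨z, hz⟩ := GHaux.prob_sigmaOf_ne_zero hR
    rw [← hz] at hu hu'
    have h1 : hammingDist z u ≤ n/8 := GHaux.mem_ball.mp hu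
    have h2 : hammingDist z u' ≤ n/8 := GHaux.mem_ball.mp hu'
    have ht : hammingDist u u' ≤ hammingDist z u + hammingDist z u' := by
      calc hammingDist u u' ≤ hammingDist u z + hammingDist z u' := hammingDist_triangle u z u'
        _ = hammingDist z u + hammingDist z u' := by rw [hammingDist_comm]
    have hc : (hammingDist u u' : ℝ) ≤ ((n/8 : ℕ) : ℝ) + ((n/8 : ℕ) : ℝ) := by
      have : hammingDist u u' ≤ n/8 + n/8 := le_trans ht (by omega)
      exact_mod_cast this
    have := GHaux.cast_div8 (n := n)
    linarith
  · intro R hR u hu v hv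
    obtain ⟨z, hz⟩ := GHaux.prob_sigmaOf_ne_zero hR
    rw [← hz] at hu hv
    have h1 : hammingDist z u ≤ n/8 := GHaux.mem_ball.mp hu
    have h2 : hammingDist (fun i => !z i) v ≤ n/8 := GHaux.mem_ball.mp hv
    have ht : n ≤ hammingDist z u + hammingDist u v + hammingDist (fun i => !z i) v := by
      calc n = hammingDist z (fun i => !z i) := (GHaux.hammingDist_compl z).symm
        _ ≤ hammingDist z u + hammingDist u (fun i => !z i) := hammingDist_triangle _ _ _
        _ ≤ hammingDist z u + (hammingDist u v + hammingDist v (fun i => !z i)) := by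
            have := hammingDist_triangle u v (fun i => !z i)
            omega
        _ = hammingDist z u + hammingDist u v + hammingDist (fun i => !z i) v := by
            rw [hammingDist_comm v]; ring
    have hc : (n : ℝ) ≤ ((n/8 : ℕ) : ℝ) + (hammingDist u v : ℝ) + ((n/8 : ℕ) : ℝ) := by
      have : n ≤ n/8 + hammingDist u v + n/8 := by omega
      exact_mod_cast this
    have := GHaux.cast_div8 (n := n)
    linarith
  · exact GHaux.hitting_of hn id Function.bijective_id
  · exact GHaux.hitting_of hn _ GHaux.compl_bijective
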